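/- Let R be a commutative complete local noetherian ring and Λ a module-finite R-algebra. Let T be a torsion class of mod Λ. If there exists a left T-approximation f : Λ → M of Λ (i.e., M ∈ T and every morphism from Λ to an object of T factors through f), then T = Fac M. -/

import Mathlib

universe u

open IsLocalRing

/-- **A torsion class admitting a left approximation of `Λ` is generated by the
approximation.**  Let `R` be a commutative complete local noetherian ring and `Λ` a
module-finite `R`-algebra.  Let `T` be a torsion class of `mod Λ` (a class of finitely
generated modules closed under factor modules and extensions).  If there exists a left
`T`-approximation `f : Λ → M` of `Λ`, then `T = Fac M`. -/
theorem torsionClass_eq_fac_of_leftApproximation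
    (R : Type u) [CommRing R] [IsNoetherianRing R] [IsLocalRing R]
    [IsAdicComplete (maximalIdeal R) R]
    (Λ : Type u) [Ring Λ] [Algebra R Λ] [Module.Finite R Λ]
    (T : Set (ModuleCat.{u} Λ))
    -- every member of `T` is finitely generated
    (hfg : ∀ X ∈ T, Module.Finite Λ X)
    -- `T` is closed under factor modules
    (hquot : ∀ X ∈ T, ∀ Y : ModuleCat.{u} Λ, Module.Finite Λ Y →
      ∀ p : X →ₗ[Λ] Y, Function.Surjective p → Y ∈ T)
    -- `T` is closed under extensions
    (hext : ∀ X ∈ T, ∀ Z ∈ T, ∀ Y : ModuleCat.{u} Λ, Module.Finite Λ Y →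
      ∀ (i : X →ₗ[Λ] Y) (p : Y →ₗ[Λ] Z),
        Function.Injective i → Function.Surjective p →
        LinearMap.range i = LinearMap.ker p → Y ∈ T)
    -- a left `T`-approximation `f : Λ → M` of `Λ`
    (M : ModuleCat.{u} Λ) (hM : M ∈ T) (f : Λ →ₗ[Λ] M)
    (happrox : ∀ X ∈ T, ∀ h : Λ →ₗ[Λ] X, ∃ u : M →ₗ[Λ] X, u.comp f = h) :
    -- then `T = Fac M`
    ∀ X : ModuleCat.{u} Λ, Module.Finite Λ X →
      (X ∈ T ↔ ∃ (n : ℕ) (p : (Fin n → M) →ₗ[Λ] X), Function.Surjective p) := by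
  -- First: every finite power `M^n` lies in `T`.
  haveI := hfg M hM
  have hpow : ∀ n : ℕ, ModuleCat.of Λ (Fin n → M) ∈ T := by
    intro n
    induction n with
    | zero =>
      exact hquot M hM (ModuleCat.of Λ (Fin 0 → M)) inferInstance 0
        (fun v => ⟨0, Subsingleton.elim _ _⟩)
    | succ n ih =>
      refine hext M hM (ModuleCat.of Λ (Fin n → M)) ih
        (ModuleCat.of Λ (Fin (n + 1) → M))
        (Module.Finite.pi (R := Λ))
        (LinearMap.single Λ (fun _ : Fin (n + 1) => M) 0)
        (LinearMap.funLeft Λ M Fin.succ)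
        (by intro a b h; simpa using congrFun h 0)
        (LinearMap.funLeft_surjective_of_injective Λ M Fin.succ
          (Fin.succ_injective n)) ?_
      ext v
      constructor
      · rintro ⟨m, rfl⟩
        show LinearMap.funLeft Λ M Fin.succ _ = 0
        funext j
        show (Pi.single (M := fun _ : Fin (n+1) => M) 0 m) j.succ = 0
        rw [Pi.single_eq_of_ne (Fin.succ_ne_zero j)]
      · intro hv
        refine ⟨v 0, ?_⟩
        show Pi.single 0 (v 0) = v
        funext j
        refine Fin.cases ?_ (fun j => ?_) j
        · simp
        · have h0 : (LinearMap.funLeft Λ M Fin.succ) v = 0 := hv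
          have hj : v j.succ = 0 := congrFun h0 j
          rw [Pi.single_eq_of_ne (Fin.succ_ne_zero j), hj]
  intro X hX
  constructor
  · intro hXT
    obtain ⟨n, s, hs⟩ := Module.Finite.exists_fin (R := Λ) (M := X)
    -- for each generator, a linear map `Λ → X`
    have key : ∀ i : Fin n, ∃ u : M →ₗ[Λ] X, u (f 1) = s i := by
      intro i
      let h : Λ →ₗ[Λ] X :=
        { toFun := fun r => r • s i
          map_add' := fun a b => add_smul a b (s i)
          map_smul' := fun a b => mul_smul a b (s i) }
      obtain ⟨u, hu⟩ := happrox X hXT h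
      exact ⟨u, by simpa [h] using congrFun (congrArg DFunLike.coe hu) 1⟩
    choose u hu using key
    refine ⟨n, ∑ i, (u i).comp (LinearMap.proj i), ?_⟩
    rw [← LinearMap.range_eq_top, eq_top_iff, ← hs, Submodule.span_le]
    rintro x ⟨i, rfl⟩
    refine ⟨Pi.single i (f 1), ?_⟩
    simp only [LinearMap.coe_sum, Finset.sum_apply, LinearMap.coe_comp,
      Function.comp_apply, LinearMap.proj_apply]
    rw [Finset.sum_eq_single i]
    · simp [hu]
    · intro j _ hj
      simp [Pi.single_eq_of_ne hj]
    · simp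
  · rintro ⟨n, p, hp⟩
    exact hquot (ModuleCat.of Λ (Fin n → M)) (hpow n) X hX p hp
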